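/- Let L be an even hyperbolic lattice and e ∈ L a primitive isotropic vector with n = gcd{e.x : x ∈ L}. Then there exists f ∈ L with e.f = n such that the sublattice H = ⟨e,f⟩ is primitive in L, i.e. L/H is torsion-free. -/

import Mathlib

/-- Bridge between the `zsmul` action and the given `Module ℤ L` instance action. -/
theorem stmt0_bridge {L : Type*} [AddCommGroup L] [inst : Module ℤ L] (n : ℤ) (x : L) :
    n • x = @HSMul.hSMul ℤ L L (@instHSMul ℤ L
      (@SMulZeroClass.toSMul ℤ L _ (@SMulWithZero.toSMulZeroClass ℤ L _ _
        (@MulActionWithZero.toSMulWithZero ℤ L _ _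
          (@Module.toMulActionWithZero ℤ L _ _ inst))))) n x :=
  (int_smul_eq_zsmul inst n x).symm

/-- General core lemma over an arbitrary commutative domain `R` with a Bezout property. -/
theorem stmt0_core {R M : Type*} [CommRing R] [IsDomain R] [AddCommGroup M] [Module R M]
    [NoZeroSMulDivisors R M]
    (bez : ∀ m a : R, m ≠ 0 →
      ∃ g m' a' u v : R, g ≠ 0 ∧ m = g * m' ∧ a = g * a' ∧ u * m' + v * a' = 1)
    (B : M →ₗ[R] M →ₗ[R] R) (e f : M)
    (hprim : ∀ (m : R) (u : M), e = m • u → IsUnit m)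
    (n : R) (hn : n ≠ 0) (he0 : B e e = 0) (hf : B e f = n)
    (hdvd : ∀ x : M, n ∣ B e x) :
    ∀ (x : M) (m : R), m ≠ 0 → m • x ∈ Submodule.span R ({e, f} : Set M) →
      x ∈ Submodule.span R ({e, f} : Set M) := by
  have aux : ∀ (m a : R) (y : M), m ≠ 0 → m • y = a • e → m ∣ a := by
    intro m a y hm h
    obtain ⟨g, m', a', u, v, hg0, hm', ha', huv⟩ := bez m a hm
    have hy : m' • y = a' • e := by
      apply smul_right_injective M hg0
      show g • (m' • y) = g • (a' • e)
      rw [← mul_smul, ← mul_smul, ← hm', ← ha']; exact h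
    have he : e = m' • (u • e + v • y) := by
      calc e = (u * m' + v * a') • e := by rw [huv, one_smul]
      _ = (m' * u) • e + v • (a' • e) := by rw [add_smul, mul_comm u m', mul_smul m' u, mul_smul v a']
      _ = (m' * u) • e + v • (m' • y) := by rw [hy]
      _ = m' • (u • e + v • y) := by rw [smul_add, mul_smul, smul_comm v m']
    obtain ⟨c, hc⟩ := isUnit_iff_dvd_one.mp (hprim m' _ he)
    refine ⟨c * a', ?_⟩
    rw [ha', hm']
    calc g * a' = g * (1 * a') := by ring
    _ = g * (m' * c * a') := by rw [← hc]
    _ = g * m' * (c * a') := by ring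
  intro x m hm hmem
  rw [Submodule.mem_span_pair] at hmem ⊢
  obtain ⟨a, b, hab⟩ := hmem
  obtain ⟨k, hk⟩ := hdvd x
  have hb : b = m * k := by
    have h1 : B e (a • e + b • f) = b * n := by
      simp only [map_add, map_smul, smul_eq_mul, he0, hf]; ring
    have h2 : B e (a • e + b • f) = (m * k) * n := by
      rw [hab]; simp only [map_smul, smul_eq_mul, hk]; ring
    rw [h1] at h2
    exact mul_right_cancel₀ hn h2
  have hme : m • (x - k • f) = a • e := by
    have h3 : a • e = m • x - b • f := by rw [← hab]; abel
    rw [h3, hb, smul_sub, smul_smul]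
  obtain ⟨q, hq⟩ := aux m a (x - k • f) hm hme
  have hx : x - k • f = q • e := by
    apply smul_right_injective M hm
    show m • (x - k • f) = m • (q • e)
    rw [hme, hq, mul_smul]
  exact ⟨q, k, (sub_eq_iff_eq_add.mp hx).symm⟩

/-- Bezout data for ℤ. -/
theorem stmt0_bez : ∀ m a : ℤ, m ≠ 0 →
    ∃ g m' a' u v : ℤ, g ≠ 0 ∧ m = g * m' ∧ a = g * a' ∧ u * m' + v * a' = 1 := by
  intro m a hm
  have hg0 : (Int.gcd m a : ℤ) ≠ 0 := by
    simp only [ne_eq, Int.natCast_eq_zero, Int.gcd_eq_zero_iff, not_and_or]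
    exact Or.inl hm
  have hcop : IsCoprime (m / (Int.gcd m a : ℤ)) (a / (Int.gcd m a : ℤ)) := by
    rw [Int.isCoprime_iff_gcd_eq_one]
    exact Int.gcd_div_gcd_div_gcd (Int.gcd_pos_of_ne_zero_left a hm)
  obtain ⟨u, v, huv⟩ := hcop
  exact ⟨(Int.gcd m a : ℤ), m / (Int.gcd m a : ℤ), a / (Int.gcd m a : ℤ), u, v, hg0,
    (Int.ediv_mul_cancel (Int.gcd_dvd_left _ _)).symm.trans (mul_comm _ _),
    (Int.ediv_mul_cancel (Int.gcd_dvd_right _ _)).symm.trans (mul_comm _ _), huv⟩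



/-- In an even hyperbolic lattice `L`, given a primitive isotropic vector `e`
with `n = gcd {B e x : x ∈ L}`, there exists `f ∈ L` with `B e f = n` such that the
sublattice `H = span {e, f}` is primitive in `L`, i.e. `L / H` is torsion-free. -/
theorem stmt0 (L : Type*) [AddCommGroup L] [Module ℤ L]
    [Module.Free ℤ L] [Module.Finite ℤ L]
    (B : L →ₗ[ℤ] L →ₗ[ℤ] ℤ)
    (hsym : ∀ x y : L, B x y = B y x)
    (heven : ∀ x : L, ∃ c : ℤ, B x x = 2 * c)
    (hnondeg : ∀ x : L, (∀ y : L, B x y = 0) → x = 0)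
    (hhyp : ∃ v : L, 0 < B v v ∧ ∀ x : L, B v x = 0 → x ≠ 0 → B x x < 0)
    (e : L) (he0 : B e e = 0)
    (heprim : ∀ (m : ℤ) (u : L), e = m • u → IsUnit m)
    (n : ℤ) (hn : 0 < n)
    (hdvd : ∀ x : L, n ∣ B e x)
    (hex : ∃ x : L, B e x = n) :
    ∃ f : L, B e f = n ∧
      ∀ (x : L) (m : ℤ), m ≠ 0 → m • x ∈ Submodule.span ℤ ({e, f} : Set L) →
        x ∈ Submodule.span ℤ ({e, f} : Set L) := by
  obtain ⟨f, hf⟩ := hex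
  refine ⟨f, hf, fun x m hm hmem => ?_⟩
  rw [stmt0_bridge] at hmem
  haveI : @NoZeroSMulDivisors ℤ L _ _ (@SMulZeroClass.toSMul ℤ L _
      (@SMulWithZero.toSMulZeroClass ℤ L _ _ (@MulActionWithZero.toSMulWithZero ℤ L _ _
        (@Module.toMulActionWithZero ℤ L _ _ ‹Module ℤ L›)))) := by
    refine @NoZeroSMulDivisors.mk ℤ L _ _ (@SMulZeroClass.toSMul ℤ L _
      (@SMulWithZero.toSMulZeroClass ℤ L _ _ (@MulActionWithZero.toSMulWithZero ℤ L _ _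
        (@Module.toMulActionWithZero ℤ L _ _ ‹Module ℤ L›)))) (fun {c x} h => ?_)
    refine or_iff_not_imp_left.mpr fun hc => ?_
    have := smul_right_injective L hc (a₁ := x) (a₂ := 0)
    exact this (by beta_reduce; rw [h, smul_zero])
  exact stmt0_core stmt0_bez B e f
    (fun m u h => heprim m u (h.trans (stmt0_bridge m u).symm))
    n hn.ne' he0 hf hdvd x m hm hmem
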